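/- Let X be a real Banach space, β ∈ (0,1], γ ∈ (0,1) with γβ < 1, and suppose f ∈ C_b(X) admits a representation f = ∫_0^∞ u(t)/t dt where u : (0,∞) → C_b^β(X) is continuous, ‖u(t)‖_∞ ≤ M t^γ and ‖u(t)‖_{C_b^β(X)} ≤ M t^{γ−1} for all t > 0. Then f is (γβ)-Hölder continuous, with [f]_{C^{γβ}} ≤ K·M for a constant K depending only on β and γ. -/

import Mathlib

open MeasureTheory Set

/-- If f = ∫_0^∞ u(t)/t dt with ‖u(t)‖_∞ ≤ M t^γ and ‖u(t)‖_{C_b^β} ≤ M t^{γ-1},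
β ∈ (0,1], γ ∈ (0,1), γβ < 1, then f is (γβ)-Hölder with [f]_{C^{γβ}} ≤ K·M. -/
theorem stmt6 (β γ : ℝ) (hβ : β ∈ Set.Ioc (0:ℝ) 1) (hγ : γ ∈ Set.Ioo (0:ℝ) 1)
    (hγβ : γ * β < 1) :
    ∃ K : ℝ, 0 < K ∧
      ∀ (X : Type) [NormedAddCommGroup X] [NormedSpace ℝ X]
        (f : X → ℝ) (u : ℝ → X → ℝ) (M : ℝ),
        Continuous f →
        (∀ t ∈ Ioi (0:ℝ), Continuous (u t)) →
        (∀ x, IntegrableOn (fun t => u t x / t) (Ioi (0:ℝ))) →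
        (∀ x, f x = ∫ t in Ioi (0:ℝ), u t x / t) →
        (∀ t ∈ Ioi (0:ℝ), ∀ x, |u t x| ≤ M * t ^ γ) →
        (∀ t ∈ Ioi (0:ℝ), ∀ x, |u t x| ≤ M * t ^ (γ - 1)) →
        (∀ t ∈ Ioi (0:ℝ), ∀ x y, |u t x - u t y| ≤ M * t ^ (γ - 1) * ‖x - y‖ ^ β) →
        ∀ x y, |f x - f y| ≤ K * M * ‖x - y‖ ^ (γ * β) := by
  obtain ⟨hβ0, hβ1⟩ := hβ
  obtain ⟨hγ0, hγ1⟩ := hγ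
  have h1γ : 0 < 1 - γ := by linarith
  refine ⟨2/γ + 1/(1-γ), by positivity, ?_⟩
  intro X _ _ f u M hf hu hint hrep hsup hsup' hhold x y
  have hM : 0 ≤ M := by
    have h1 := hsup 1 (by norm_num) x
    have h2 := (abs_nonneg (u 1 x)).trans h1
    simpa using h2
  by_cases hxy : x = y
  · subst hxy
    simp only [sub_self, abs_zero]
    positivity
  have hd : 0 < ‖x - y‖ := norm_sub_pos_iff.mpr hxy
  set d := ‖x - y‖ with hd_def
  set T := d ^ β with hT_def
  have hT : 0 < T := Real.rpow_pos_of_pos hd β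
  set h : ℝ → ℝ := fun t => u t x / t - u t y / t with hh
  have hintd : IntegrableOn h (Ioi 0) := (hint x).sub (hint y)
  have hI1 : IntegrableOn h (Ioc 0 T) := hintd.mono_set Ioc_subset_Ioi_self
  have hI2 : IntegrableOn h (Ioi T) := hintd.mono_set (Ioi_subset_Ioi hT.le)
  have hfs : f x - f y = (∫ t in Ioc 0 T, h t) + ∫ t in Ioi T, h t := by
    rw [hrep x, hrep y, ← integral_sub (hint x) (hint y),
      ← Ioc_union_Ioi_eq_Ioi hT.le,
      setIntegral_union (Ioc_disjoint_Ioi le_rfl) measurableSet_Ioi hI1 hI2]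
  have hnorm : ∀ t : ℝ, 0 < t → ‖h t‖ = |u t x - u t y| / t := by
    intro t ht0
    rw [hh]
    simp only [Real.norm_eq_abs, div_sub_div_same, abs_div, abs_of_pos ht0]
  have hb1 : ∫ t in Ioc 0 T, ‖h t‖ ≤ 2 * M * (T ^ γ / γ) := by
    have hint_bound : IntegrableOn (fun t => 2 * M * t ^ (γ - 1)) (Ioc 0 T) := by
      apply Integrable.const_mul
      have hi := intervalIntegral.intervalIntegrable_rpow' (a := 0) (b := T)
        (show (-1:ℝ) < γ - 1 by linarith)
      rw [intervalIntegrable_iff_integrableOn_Ioc_of_le hT.le] at hi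
      exact hi
    have hval : ∫ t in Ioc 0 T, 2 * M * t ^ (γ - 1) = 2 * M * (T ^ γ / γ) := by
      rw [MeasureTheory.integral_const_mul, ← intervalIntegral.integral_of_le hT.le,
        integral_rpow (Or.inl (by linarith))]
      have e : γ - 1 + 1 = γ := by ring
      rw [e, Real.zero_rpow hγ0.ne']
      ring
    refine le_trans (setIntegral_mono_on hI1.norm hint_bound measurableSet_Ioc ?_) hval.le
    intro t ht
    have ht0 : 0 < t := ht.1
    rw [hnorm t ht0, div_le_iff₀ ht0]
    have hb : |u t x - u t y| ≤ 2 * M * t ^ γ := by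
      calc |u t x - u t y| ≤ |u t x| + |u t y| := abs_sub _ _
        _ ≤ M * t ^ γ + M * t ^ γ := add_le_add (hsup t ht0 x) (hsup t ht0 y)
        _ = 2 * M * t ^ γ := by ring
    have e : t ^ (γ - 1) * t = t ^ γ := by
      rw [← Real.rpow_add_one ht0.ne', sub_add_cancel]
    calc |u t x - u t y| ≤ 2 * M * t ^ γ := hb
      _ = 2 * M * t ^ (γ - 1) * t := by
          rw [show 2 * M * t ^ (γ - 1) * t = 2 * M * (t ^ (γ - 1) * t) by ring, e]
  have hb2 : ∫ t in Ioi T, ‖h t‖ ≤ M * d ^ β * (T ^ (γ - 1) / (1 - γ)) := by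
    have hint_bound : IntegrableOn (fun t => M * d ^ β * t ^ (γ - 2)) (Ioi T) :=
      (integrableOn_Ioi_rpow_of_lt (by linarith) hT).const_mul _
    have hval : ∫ t in Ioi T, M * d ^ β * t ^ (γ - 2) = M * d ^ β * (T ^ (γ - 1) / (1 - γ)) := by
      rw [MeasureTheory.integral_const_mul, integral_Ioi_rpow_of_lt (by linarith) hT]
      have e : γ - 2 + 1 = γ - 1 := by ring
      have hne : γ - 1 ≠ 0 := by linarith
      have hne2 : (1:ℝ) - γ ≠ 0 := by linarith
      have e2 : -T ^ (γ - 1) / (γ - 1) = T ^ (γ - 1) / (1 - γ) := by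
        field_simp
        ring
      rw [e, e2]
    refine le_trans (setIntegral_mono_on hI2.norm hint_bound measurableSet_Ioi ?_) hval.le
    intro t ht
    have ht0 : 0 < t := hT.trans ht
    rw [hnorm t ht0, div_le_iff₀ ht0]
    have e : t ^ (γ - 2) * t = t ^ (γ - 1) := by
      rw [← Real.rpow_add_one ht0.ne']
      congr 1
      ring
    calc |u t x - u t y| ≤ M * t ^ (γ - 1) * d ^ β := hhold t ht0 x y
      _ = M * d ^ β * t ^ (γ - 2) * t := by rw [mul_assoc (M * d ^ β), e]; ring
  have key : |f x - f y| ≤ 2 * M * (T ^ γ / γ) + M * d ^ β * (T ^ (γ - 1) / (1 - γ)) := by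
    rw [hfs]
    calc |(∫ t in Ioc 0 T, h t) + ∫ t in Ioi T, h t|
        ≤ |∫ t in Ioc 0 T, h t| + |∫ t in Ioi T, h t| := abs_add_le _ _
      _ ≤ (∫ t in Ioc 0 T, ‖h t‖) + ∫ t in Ioi T, ‖h t‖ := by
          rw [← Real.norm_eq_abs, ← Real.norm_eq_abs]
          exact add_le_add (norm_integral_le_integral_norm _) (norm_integral_le_integral_norm _)
      _ ≤ _ := add_le_add hb1 hb2
  have e1 : T ^ γ = d ^ (γ * β) := by
    rw [hT_def, ← Real.rpow_mul hd.le, mul_comm]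
  have e2 : d ^ β * T ^ (γ - 1) = d ^ (γ * β) := by
    rw [hT_def, ← Real.rpow_mul hd.le, ← Real.rpow_add hd]
    congr 1
    ring
  calc |f x - f y| ≤ 2 * M * (T ^ γ / γ) + M * d ^ β * (T ^ (γ - 1) / (1 - γ)) := key
    _ = 2 * M * (d ^ (γ * β) / γ) + (d ^ β * T ^ (γ - 1)) * (M / (1 - γ)) := by
        rw [e1]; ring
    _ = (2 / γ + 1 / (1 - γ)) * M * d ^ (γ * β) := by
        rw [e2]; field_simp
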